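/- Let n ≥ 2 and d > 0. The determinant of the (n+3)×(n+3) Cayley-Menger matrix of points x, p₁,...,pₙ, y with φ-values φ(x,pᵢ) = φ(y,pᵢ) = d², φ(pᵢ,pⱼ) = (2+2/n)·d² for i ≠ j, φ(x,y) = t, and all self-values 0, equals ((−2n−2)^{n−1}/nⁿ)·d^{2n−2}·t·(n²·t − 4d²). -/

import Mathlib

open Finset
set_option maxHeartbeats 1600000


/-- Cayley-Menger matrix of points x, p₁, ..., pₙ, y with φ(x,pᵢ) = φ(y,pᵢ) = d²,
φ(pᵢ,pⱼ) = (2+2/n)·d² for i ≠ j, φ(x,y) = t, and all self-values 0. -/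
noncomputable def M12 (n : ℕ) (d t : ℂ) : Matrix (Fin (n + 3)) (Fin (n + 3)) ℂ :=
  Matrix.of fun i j =>
    if i = 0 then (if j = 0 then 0 else 1)
    else if j = 0 then 1
    else if i = j then 0
    else if (i = 1 ∧ j = Fin.last (n + 2)) ∨ (i = Fin.last (n + 2) ∧ j = 1) then t
    else if i = 1 ∨ j = 1 ∨ i = Fin.last (n + 2) ∨ j = Fin.last (n + 2) then d ^ 2
    else (2 + 2 / (n : ℂ)) * d ^ 2



noncomputable def bval (n : ℕ) (d : ℂ) : ℂ := (2 + 2/(n:ℂ)) * d^2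

noncomputable def Pent (n : ℕ) (i j : ℕ) : ℂ :=
  if j = 0 then (if i = 0 then 1 else 0)
  else if j = 1 then (if i = 1 then 1 else 0)
  else if j = 2 then (if i = n+2 then 1 else 0)
  else if j = 3 then (if 2 ≤ i ∧ i ≤ n+1 then 1 else 0)
  else if i = 2 then 1 else if i + 1 = j then -1 else 0

noncomputable def Qent (n : ℕ) (i j : ℕ) : ℂ :=
  if j = 0 then (if i = 0 then 1 else 0)
  else if j = 1 then (if i = 1 then 1 else 0)
  else if j = n+2 then (if i = 2 then 1 else 0)
  else if i ≤ 2 then 0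
  else if 4 ≤ i ∧ i = j + 1 then 1/(n:ℂ) - 1 else 1/(n:ℂ)

noncomputable def Bent (n : ℕ) (d t : ℂ) (i j : ℕ) : ℂ :=
  if j = 0 then (if i = 1 ∨ i = 2 ∨ i = 3 then 1 else 0)
  else if j = 1 then (if i = 0 then 1 else if i = 2 then t else if i = 3 then d^2 else 0)
  else if j = 2 then (if i = 0 then 1 else if i = 1 then t else if i = 3 then d^2 else 0)
  else if j = 3 then (if i = 0 then (n:ℂ) else if i = 1 ∨ i = 2 then (n:ℂ)*d^2
    else if i = 3 then ((n:ℂ)-1) * bval n d else 0)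
  else if i = j then -(bval n d) else 0

noncomputable def Ment (n : ℕ) (d t : ℂ) (i j : ℕ) : ℂ :=
  if i = 0 then (if j = 0 then 0 else 1)
  else if j = 0 then 1
  else if i = j then 0
  else if (i = 1 ∧ j = n+2) ∨ (i = n+2 ∧ j = 1) then t
  else if i = 1 ∨ j = 1 ∨ i = n+2 ∨ j = n+2 then d^2
  else bval n d

noncomputable def Pmat (n : ℕ) : Matrix (Fin (n+3)) (Fin (n+3)) ℂ :=
  Matrix.of fun i j => Pent n i.val j.val
noncomputable def Qmat (n : ℕ) : Matrix (Fin (n+3)) (Fin (n+3)) ℂ :=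
  Matrix.of fun i j => Qent n i.val j.val
noncomputable def Bmat (n : ℕ) (d t : ℂ) : Matrix (Fin (n+3)) (Fin (n+3)) ℂ :=
  Matrix.of fun i j => Bent n d t i.val j.val

lemma M12_eq_Ment (n : ℕ) (d t : ℂ) :
    M12 n d t = Matrix.of fun i j : Fin (n+3) => Ment n d t i.val j.val := by
  ext i j
  simp only [M12, Ment, bval, Matrix.of_apply, Fin.ext_iff, Fin.val_last, Fin.val_zero,
    Fin.val_one]

lemma sum_dec (m : ℕ) (hm : 4 ≤ m) (f : ℕ → ℂ) :
    ∑ k ∈ range m, f k = f 0 + f 1 + f 2 + f 3 + ∑ k ∈ Ico 4 m, f k := by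
  rw [range_eq_Ico, ← Finset.sum_Ico_consecutive _ (Nat.zero_le 4) hm, ← Finset.range_eq_Ico]
  simp [Finset.sum_range_succ]

lemma sum_Ico_ite (a b p : ℕ) (v c : ℂ) :
    (∑ k ∈ Ico a b, if k = p then v else c)
      = (if p ∈ Ico a b then v - c else 0) + (b - a : ℕ) * c := by
  have h : ∀ k, (if k = p then v else c) = (if k = p then v - c else 0) + c := by
    intro k; split <;> ring
  simp_rw [h, Finset.sum_add_distrib, Finset.sum_ite_eq', Finset.sum_const, Nat.card_Ico,
    nsmul_eq_mul]

lemma sum_Ico_ite2 (a b p q : ℕ) (hpq : p ≠ q) (v w c : ℂ) :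
    (∑ k ∈ Ico a b, if k = p then v else if k = q then w else c)
      = (if p ∈ Ico a b then v - c else 0) + (if q ∈ Ico a b then w - c else 0)
        + (b - a : ℕ) * c := by
  have h : ∀ k, (if k = p then v else if k = q then w else c)
      = (if k = p then v - c else 0) + ((if k = q then w - c else 0) + c) := by
    intro k
    rcases eq_or_ne k p with rfl | hp
    · rw [if_pos rfl, if_pos rfl, if_neg hpq]; ring
    · rw [if_neg hp, if_neg hp]; split <;> ring
  simp_rw [h, Finset.sum_add_distrib, Finset.sum_ite_eq', Finset.sum_const, Nat.card_Ico,
    nsmul_eq_mul]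
  ring



lemma Pent_tail (n i k : ℕ) (hk4 : 4 ≤ k) :
    Pent n i k = if i = 2 then 1 else if i + 1 = k then -1 else 0 := by
  unfold Pent
  rw [if_neg (by omega), if_neg (by omega), if_neg (by omega), if_neg (by omega)]

lemma Qent_mid (n k j : ℕ) (hj0 : 2 ≤ j) (hjn : j ≤ n+1) (hk : 4 ≤ k) :
    Qent n k j = if k = j + 1 then 1/(n:ℂ) - 1 else 1/(n:ℂ) := by
  unfold Qent
  rw [if_neg (by omega), if_neg (by omega), if_neg (by omega), if_neg (by omega)]
  rcases eq_or_ne k (j+1) with rfl | hne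
  · rw [if_pos ⟨hk, rfl⟩, if_pos rfl]
  · rw [if_neg (fun h => hne h.2), if_neg hne]

lemma Qent_small (n k j : ℕ) (hj0 : 2 ≤ j) (hjn : j ≤ n+1) (hk : k ≤ 2) :
    Qent n k j = 0 := by
  unfold Qent
  rw [if_neg (by omega), if_neg (by omega), if_neg (by omega), if_pos hk]

lemma Qent_three (n j : ℕ) (hj0 : 2 ≤ j) (hjn : j ≤ n+1) :
    Qent n 3 j = 1/(n:ℂ) := by
  unfold Qent
  rw [if_neg (by omega), if_neg (by omega), if_neg (by omega), if_neg (by omega),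
    if_neg (by omega)]

lemma Pent_three (n i : ℕ) : Pent n i 3 = if 2 ≤ i ∧ i ≤ n+1 then 1 else 0 := by
  unfold Pent
  rw [if_neg (by omega), if_neg (by omega), if_neg (by omega), if_pos rfl]

lemma PQ_nat (n : ℕ) (hn : 2 ≤ n) (i j : ℕ) (hi : i < n+3) (hj : j < n+3) :
    ∑ k ∈ range (n+3), Pent n i k * Qent n k j = if i = j then 1 else 0 := by
  have hn0 : (n:ℂ) ≠ 0 := Nat.cast_ne_zero.mpr (by omega)
  rcases (by omega : j = 0 ∨ j = 1 ∨ j = n+2 ∨ (2 ≤ j ∧ j ≤ n+1)) with rfl | rfl | rfl | ⟨hj2, hjn⟩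
  · have h : ∀ k, Pent n i k * Qent n k 0 = if k = 0 then Pent n i k else 0 := by
      intro k; simp [Qent, mul_ite]
    simp_rw [h, Finset.sum_ite_eq' (range (n+3)) 0]
    simp [Pent, pos_iff_ne_zero]
  · have h : ∀ k, Pent n i k * Qent n k 1 = if k = 1 then Pent n i k else 0 := by
      intro k; simp [Qent, mul_ite]
    simp_rw [h, Finset.sum_ite_eq' (range (n+3)) 1]
    simp only [mem_range, if_pos (by omega : 1 < n+3)]
    simp [Pent]
  · have h : ∀ k, Pent n i k * Qent n k (n+2) = if k = 2 then Pent n i k else 0 := by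
      intro k
      have h2 : (n+2 ≠ 0) := by omega
      have h1 : (n+2 ≠ 1) := by omega
      simp [Qent, h1, h2, mul_ite]
    simp_rw [h, Finset.sum_ite_eq' (range (n+3)) 2]
    simp only [mem_range, if_pos (by omega : 2 < n+3)]
    unfold Pent
    rw [if_neg (by omega), if_neg (by omega), if_pos rfl]
  · -- j middle
    rw [sum_dec _ (by omega)]
    rw [show Pent n i 0 * Qent n 0 j = 0 by rw [Qent_small n 0 j hj2 hjn (by omega)]; ring]
    rw [show Pent n i 1 * Qent n 1 j = 0 by rw [Qent_small n 1 j hj2 hjn (by omega)]; ring]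
    rw [show Pent n i 2 * Qent n 2 j = 0 by rw [Qent_small n 2 j hj2 hjn (by omega)]; ring]
    rw [Qent_three n j hj2 hjn, Pent_three n i]
    have hcard : ((n+3-4 : ℕ) : ℂ) = (n:ℂ) - 1 := by
      have h : (n+3-4 : ℕ) = n - 1 := by omega
      rw [h, Nat.cast_sub (by omega)]; norm_num
    rcases (by omega : i = 0 ∨ i = 1 ∨ i = 2 ∨ (3 ≤ i ∧ i ≤ n+1) ∨ i = n+2)
      with rfl | rfl | rfl | ⟨hi3, hin⟩ | rfl
    · have ht : ∀ k ∈ Ico 4 (n+3), Pent n 0 k * Qent n k j = 0 := by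
        intro k hk; rw [mem_Ico] at hk
        rw [Pent_tail n 0 k hk.1, if_neg (by omega), if_neg (by omega)]; ring
      rw [Finset.sum_congr rfl ht, Finset.sum_const_zero,
        if_neg (show ¬(2 ≤ 0 ∧ 0 ≤ n+1) by omega), if_neg (show (0:ℕ) ≠ j by omega)]
      ring
    · have ht : ∀ k ∈ Ico 4 (n+3), Pent n 1 k * Qent n k j = 0 := by
        intro k hk; rw [mem_Ico] at hk
        rw [Pent_tail n 1 k hk.1, if_neg (by omega), if_neg (by omega)]; ring
      rw [Finset.sum_congr rfl ht, Finset.sum_const_zero,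
        if_neg (show ¬(2 ≤ 1 ∧ 1 ≤ n+1) by omega), if_neg (show (1:ℕ) ≠ j by omega)]
      ring
    · -- i = 2
      have ht : ∀ k ∈ Ico 4 (n+3), Pent n 2 k * Qent n k j
          = (if k = j+1 then 1/(n:ℂ) - 1 else 1/(n:ℂ)) := by
        intro k hk; rw [mem_Ico] at hk
        rw [Pent_tail n 2 k hk.1, if_pos rfl, Qent_mid n k j hj2 hjn hk.1, one_mul]
      rw [Finset.sum_congr rfl ht, sum_Ico_ite, hcard,
        if_pos (show 2 ≤ 2 ∧ 2 ≤ n+1 by omega)]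
      rcases (by omega : j = 2 ∨ 3 ≤ j) with rfl | hj3
      · rw [if_neg (show (2+1 : ℕ) ∉ Ico 4 (n+3) by simp [mem_Ico]), if_pos rfl]
        field_simp
        ring
      · rw [if_pos (show j+1 ∈ Ico 4 (n+3) from mem_Ico.mpr (by omega)),
          if_neg (show (2:ℕ) ≠ j by omega)]
        field_simp
        ring
    · -- i middle, 3 ≤ i ≤ n+1
      rw [if_pos (show 2 ≤ i ∧ i ≤ n+1 by omega)]
      rcases eq_or_ne i j with rfl | hij
      · have ht : ∀ k ∈ Ico 4 (n+3), Pent n i k * Qent n k i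
            = (if k = i+1 then 1 - 1/(n:ℂ) else 0) := by
          intro k hk; rw [mem_Ico] at hk
          rw [Pent_tail n i k hk.1, if_neg (by omega), Qent_mid n k i hj2 hjn hk.1]
          split_ifs <;> first | omega | contradiction | ring
        rw [Finset.sum_congr rfl ht, sum_Ico_ite,
          if_pos (show i+1 ∈ Ico 4 (n+3) from mem_Ico.mpr (by omega)), if_pos rfl]
        ring
      · have ht : ∀ k ∈ Ico 4 (n+3), Pent n i k * Qent n k j
            = (if k = i+1 then -(1/(n:ℂ)) else 0) := by
          intro k hk; rw [mem_Ico] at hk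
          rw [Pent_tail n i k hk.1, if_neg (by omega), Qent_mid n k j hj2 hjn hk.1]
          split_ifs <;> first | omega | contradiction | ring
        rw [Finset.sum_congr rfl ht, sum_Ico_ite,
          if_pos (show i+1 ∈ Ico 4 (n+3) from mem_Ico.mpr (by omega)), if_neg hij]
        ring
    · have ht : ∀ k ∈ Ico 4 (n+3), Pent n (n+2) k * Qent n k j = 0 := by
        intro k hk; rw [mem_Ico] at hk
        rw [Pent_tail n (n+2) k hk.1, if_neg (by omega), if_neg (by omega)]; ring
      rw [Finset.sum_congr rfl ht, Finset.sum_const_zero,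
        if_neg (show ¬(2 ≤ n+2 ∧ n+2 ≤ n+1) by omega), if_neg (show (n+2 : ℕ) ≠ j by omega)]
      ring

lemma Pent_col0 (n i : ℕ) : Pent n i 0 = if i = 0 then (1:ℂ) else 0 := by
  unfold Pent; rw [if_pos rfl]

lemma Pent_col1 (n i : ℕ) : Pent n i 1 = if i = 1 then (1:ℂ) else 0 := by
  unfold Pent; rw [if_neg (by omega), if_pos rfl]

lemma Pent_col2 (n i : ℕ) : Pent n i 2 = if i = n+2 then (1:ℂ) else 0 := by
  unfold Pent; rw [if_neg (by omega), if_neg (by omega), if_pos rfl]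

lemma Ment_col0 (n : ℕ) (d t : ℂ) (i : ℕ) : Ment n d t i 0 = if i = 0 then 0 else 1 := by
  unfold Ment; norm_num

lemma Ment_col1 (n : ℕ) (hn : 2 ≤ n) (d t : ℂ) (i : ℕ) :
    Ment n d t i 1 = if i = 0 then 1 else if i = 1 then 0 else if i = n+2 then t else d^2 := by
  unfold Ment; norm_num

lemma Ment_last (n : ℕ) (hn : 2 ≤ n) (d t : ℂ) (i : ℕ) (hi : i ≤ n+2) :
    Ment n d t i (n+2)
      = if i = 0 then 1 else if i = 1 then t else if i = n+2 then 0 else d^2 := by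
  unfold Ment; norm_num
  split_ifs <;> first | rfl | omega | contradiction

lemma Ment_mid (n : ℕ) (hn : 2 ≤ n) (d t : ℂ) (i m : ℕ) (hm1 : 2 ≤ m) (hm2 : m ≤ n+1) :
    Ment n d t i m = if i = 0 then 1 else if i = 1 then d^2
      else if i = m then 0 else if i = n+2 then d^2 else bval n d := by
  unfold Ment; split_ifs <;> first | rfl | omega | contradiction

lemma Bent_tail (n : ℕ) (d t : ℂ) (k j : ℕ) (hj : j ≤ 3) (hk : 4 ≤ k) :
    Pent n i k * Bent n d t k j = 0 := by
  unfold Bent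
  rcases (by omega : j = 0 ∨ j = 1 ∨ j = 2 ∨ j = 3) with rfl | rfl | rfl | rfl
  · rw [if_pos rfl, if_neg (by omega)]; ring
  · rw [if_neg (by omega), if_pos rfl, if_neg (by omega), if_neg (by omega),
      if_neg (by omega)]; ring
  · rw [if_neg (by omega), if_neg (by omega), if_pos rfl, if_neg (by omega),
      if_neg (by omega), if_neg (by omega)]; ring
  · rw [if_neg (by omega), if_neg (by omega), if_neg (by omega), if_pos rfl,
      if_neg (by omega), if_neg (by omega), if_neg (by omega)]; ring

lemma MP_nat (n : ℕ) (hn : 2 ≤ n) (d t : ℂ) (i j : ℕ) (hi : i < n+3) (hj : j < n+3) :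
    ∑ k ∈ range (n+3), Ment n d t i k * Pent n k j
      = ∑ k ∈ range (n+3), Pent n i k * Bent n d t k j := by
  have hn0 : (n:ℂ) ≠ 0 := Nat.cast_ne_zero.mpr (by omega)
  have hcard : ((n+3-4 : ℕ) : ℂ) = (n:ℂ) - 1 := by
    have h : (n+3-4 : ℕ) = n - 1 := by omega
    rw [h, Nat.cast_sub (by omega)]; norm_num
  rcases (by omega : j = 0 ∨ j = 1 ∨ j = 2 ∨ j = 3 ∨ (4 ≤ j ∧ j ≤ n+2))
    with rfl | rfl | rfl | rfl | ⟨hj4, hjn⟩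
  · -- j = 0
    have hL : ∑ k ∈ range (n+3), Ment n d t i k * Pent n k 0 = Ment n d t i 0 := by
      have h : ∀ k, Ment n d t i k * Pent n k 0 = if k = 0 then Ment n d t i k else 0 := by
        intro k; unfold Pent; rw [if_pos rfl]; split_ifs <;> ring
      simp_rw [h, Finset.sum_ite_eq' (range (n+3)) 0]
      rw [if_pos (mem_range.mpr (by omega))]
    have hR : ∑ k ∈ range (n+3), Pent n i k * Bent n d t k 0
        = Pent n i 1 + Pent n i 2 + Pent n i 3 := by
      rw [sum_dec _ (by omega)]
      rw [Finset.sum_congr rfl (fun k hk => Bent_tail n d t k 0 (by omega) (mem_Ico.mp hk).1),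
        Finset.sum_const_zero]
      unfold Bent; norm_num
    rw [hL, hR, Ment_col0, Pent_col1, Pent_col2, Pent_three]
    split_ifs <;> first | omega | contradiction | ring
  · -- j = 1
    have hL : ∑ k ∈ range (n+3), Ment n d t i k * Pent n k 1 = Ment n d t i 1 := by
      have h : ∀ k, Ment n d t i k * Pent n k 1 = if k = 1 then Ment n d t i k else 0 := by
        intro k; unfold Pent; rw [if_neg (by omega), if_pos rfl]; split_ifs <;> ring
      simp_rw [h, Finset.sum_ite_eq' (range (n+3)) 1]
      rw [if_pos (mem_range.mpr (by omega))]
    have hR : ∑ k ∈ range (n+3), Pent n i k * Bent n d t k 1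
        = Pent n i 0 + Pent n i 2 * t + Pent n i 3 * d^2 := by
      rw [sum_dec _ (by omega)]
      rw [Finset.sum_congr rfl (fun k hk => Bent_tail n d t k 1 (by omega) (mem_Ico.mp hk).1),
        Finset.sum_const_zero]
      unfold Bent; norm_num
    rw [hL, hR, Ment_col1 n hn, Pent_col0, Pent_col2, Pent_three]
    split_ifs <;> first | omega | contradiction | ring
  · -- j = 2
    have hL : ∑ k ∈ range (n+3), Ment n d t i k * Pent n k 2 = Ment n d t i (n+2) := by
      have h : ∀ k, Ment n d t i k * Pent n k 2 = if k = n+2 then Ment n d t i k else 0 := by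
        intro k; unfold Pent; rw [if_neg (by omega), if_neg (by omega), if_pos rfl]
        split_ifs <;> ring
      simp_rw [h, Finset.sum_ite_eq' (range (n+3)) (n+2)]
      rw [if_pos (mem_range.mpr (by omega))]
    have hR : ∑ k ∈ range (n+3), Pent n i k * Bent n d t k 2
        = Pent n i 0 + Pent n i 1 * t + Pent n i 3 * d^2 := by
      rw [sum_dec _ (by omega)]
      rw [Finset.sum_congr rfl (fun k hk => Bent_tail n d t k 2 (by omega) (mem_Ico.mp hk).1),
        Finset.sum_const_zero]
      unfold Bent; norm_num
    rw [hL, hR, Ment_last n hn d t i (by omega), Pent_col0, Pent_col1, Pent_three]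
    split_ifs <;> first | omega | contradiction | ring
  · -- j = 3
    have hR : ∑ k ∈ range (n+3), Pent n i k * Bent n d t k 3
        = Pent n i 0 * (n:ℂ) + Pent n i 1 * ((n:ℂ)*d^2) + Pent n i 2 * ((n:ℂ)*d^2)
          + Pent n i 3 * (((n:ℂ)-1) * bval n d) := by
      rw [sum_dec _ (by omega)]
      rw [Finset.sum_congr rfl (fun k hk => Bent_tail n d t k 3 (by omega) (mem_Ico.mp hk).1),
        Finset.sum_const_zero]
      unfold Bent; norm_num
    rw [hR, sum_dec _ (by omega)]
    have h0 : Pent n 0 3 = 0 := by rw [Pent_three]; rw [if_neg (by omega)]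
    have h1 : Pent n 1 3 = 0 := by rw [Pent_three]; rw [if_neg (by omega)]
    have h2 : Pent n 2 3 = 1 := by rw [Pent_three]; rw [if_pos (by omega)]
    have h3 : Pent n 3 3 = 1 := by rw [Pent_three]; rw [if_pos (by omega)]
    rw [h0, h1, h2, h3]
    rcases (by omega : i = 0 ∨ i = 1 ∨ i = 2 ∨ (3 ≤ i ∧ i ≤ n+1) ∨ i = n+2)
      with rfl | rfl | rfl | ⟨hi3, hin⟩ | rfl
    · have ht : ∀ k ∈ Ico 4 (n+3), Ment n d t 0 k * Pent n k 3
          = (if k = n+2 then 0 else 1) := by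
        intro k hk; rw [mem_Ico] at hk
        rw [Pent_three]
        rcases (by omega : k = n+2 ∨ k ≤ n+1) with rfl | hk2
        · rw [if_neg (by omega), if_pos rfl]; ring
        · rw [if_pos (by omega), Ment_mid n hn d t _ _ (by omega) (by omega), mul_one,
            if_neg (show ¬(k = n+2) by omega)]
          split_ifs <;> first | omega | contradiction | ring
      rw [Finset.sum_congr rfl ht, sum_Ico_ite, hcard,
        if_pos (show n+2 ∈ Ico 4 (n+3) from mem_Ico.mpr (by omega))]
      rw [Ment_mid n hn d t _ 2 (by omega) (by omega), Ment_mid n hn d t _ 3 (by omega) (by omega),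
        Pent_col0, Pent_col1, Pent_col2, Pent_three]
      split_ifs <;> first | omega | contradiction | ring
    · have ht : ∀ k ∈ Ico 4 (n+3), Ment n d t 1 k * Pent n k 3
          = (if k = n+2 then 0 else d^2) := by
        intro k hk; rw [mem_Ico] at hk
        rw [Pent_three]
        rcases (by omega : k = n+2 ∨ k ≤ n+1) with rfl | hk2
        · rw [if_neg (by omega), if_pos rfl]; ring
        · rw [if_pos (by omega), Ment_mid n hn d t _ _ (by omega) (by omega), mul_one,
            if_neg (show ¬(k = n+2) by omega)]
          split_ifs <;> first | omega | contradiction | ring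
      rw [Finset.sum_congr rfl ht, sum_Ico_ite, hcard,
        if_pos (show n+2 ∈ Ico 4 (n+3) from mem_Ico.mpr (by omega))]
      rw [Ment_mid n hn d t _ 2 (by omega) (by omega), Ment_mid n hn d t _ 3 (by omega) (by omega),
        Pent_col0, Pent_col1, Pent_col2, Pent_three]
      split_ifs <;> first | omega | contradiction | ring
    · have ht : ∀ k ∈ Ico 4 (n+3), Ment n d t 2 k * Pent n k 3
          = (if k = n+2 then 0 else bval n d) := by
        intro k hk; rw [mem_Ico] at hk
        rw [Pent_three]
        rcases (by omega : k = n+2 ∨ k ≤ n+1) with rfl | hk2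
        · rw [if_neg (by omega), if_pos rfl]; ring
        · rw [if_pos (by omega), Ment_mid n hn d t _ _ (by omega) (by omega), mul_one,
            if_neg (show ¬(k = n+2) by omega)]
          split_ifs <;> first | omega | contradiction | ring
      rw [Finset.sum_congr rfl ht, sum_Ico_ite, hcard,
        if_pos (show n+2 ∈ Ico 4 (n+3) from mem_Ico.mpr (by omega))]
      rw [Ment_mid n hn d t _ 2 (by omega) (by omega), Ment_mid n hn d t _ 3 (by omega) (by omega),
        Pent_col0, Pent_col1, Pent_col2, Pent_three]
      split_ifs <;> first | omega | contradiction | ring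
    · have ht : ∀ k ∈ Ico 4 (n+3), Ment n d t i k * Pent n k 3
          = (if k = n+2 then 0 else if k = i then 0 else bval n d) := by
        intro k hk; rw [mem_Ico] at hk
        rw [Pent_three]
        rcases (by omega : k = n+2 ∨ k ≤ n+1) with rfl | hk2
        · rw [if_neg (by omega), if_pos rfl]; ring
        · rw [if_pos (by omega), Ment_mid n hn d t _ _ (by omega) (by omega), mul_one,
            if_neg (show ¬(k = n+2) by omega)]
          split_ifs <;> first | omega | contradiction | ring
      rw [Finset.sum_congr rfl ht, sum_Ico_ite2 _ _ _ _ (by omega), hcard,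
        if_pos (show n+2 ∈ Ico 4 (n+3) from mem_Ico.mpr (by omega))]
      rcases (by omega : i = 3 ∨ 4 ≤ i) with rfl | hi4
      · rw [if_neg (show (3:ℕ) ∉ Ico 4 (n+3) by simp [mem_Ico])]
        rw [Ment_mid n hn d t _ 2 (by omega) (by omega),
          Ment_mid n hn d t _ 3 (by omega) (by omega),
          Pent_col0, Pent_col1, Pent_col2, Pent_three]
        split_ifs <;> first | omega | contradiction | ring
      · rw [if_pos (show i ∈ Ico 4 (n+3) from mem_Ico.mpr (by omega))]
        rw [Ment_mid n hn d t _ 2 (by omega) (by omega),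
          Ment_mid n hn d t _ 3 (by omega) (by omega),
          Pent_col0, Pent_col1, Pent_col2, Pent_three]
        split_ifs <;> first | omega | contradiction | ring
    · have ht : ∀ k ∈ Ico 4 (n+3), Ment n d t (n+2) k * Pent n k 3
          = (if k = n+2 then 0 else d^2) := by
        intro k hk; rw [mem_Ico] at hk
        rw [Pent_three]
        rcases (by omega : k = n+2 ∨ k ≤ n+1) with rfl | hk2
        · rw [if_neg (by omega), if_pos rfl]; ring
        · rw [if_pos (by omega), Ment_mid n hn d t _ _ (by omega) (by omega), mul_one,
            if_neg (show ¬(k = n+2) by omega)]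
          split_ifs <;> first | omega | contradiction | ring
      rw [Finset.sum_congr rfl ht, sum_Ico_ite, hcard,
        if_pos (show n+2 ∈ Ico 4 (n+3) from mem_Ico.mpr (by omega))]
      rw [Ment_mid n hn d t _ 2 (by omega) (by omega), Ment_mid n hn d t _ 3 (by omega) (by omega),
        Pent_col0, Pent_col1, Pent_col2, Pent_three]
      split_ifs <;> first | omega | contradiction | ring
  · -- 4 ≤ j ≤ n+2
    have hL : ∑ k ∈ range (n+3), Ment n d t i k * Pent n k j
        = Ment n d t i 2 - Ment n d t i (j-1) := by
      have h : ∀ k, Ment n d t i k * Pent n k j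
          = (if k = 2 then Ment n d t i 2 else 0)
            + (if k = j-1 then -(Ment n d t i (j-1)) else 0) := by
        intro k
        rcases eq_or_ne k 2 with rfl | hk2
        · unfold Pent
          rw [if_neg (by omega), if_neg (by omega), if_neg (by omega), if_neg (by omega),
            if_pos rfl, if_pos rfl, if_neg (show ¬((2:ℕ) = j-1) by omega)]
          ring
        · rcases eq_or_ne k (j-1) with rfl | hk3
          · unfold Pent
            rw [if_neg (by omega), if_neg (by omega), if_neg (by omega), if_neg (by omega),
              if_neg hk2, if_pos (show (j-1)+1 = j by omega), if_neg hk2, if_pos rfl]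
            ring
          · unfold Pent
            rw [if_neg (by omega), if_neg (by omega), if_neg (by omega), if_neg (by omega),
              if_neg hk2, if_neg (show ¬(k+1 = j) by omega), if_neg hk2, if_neg hk3]
            ring
      simp_rw [h, Finset.sum_add_distrib, Finset.sum_ite_eq' (range (n+3)) 2,
        Finset.sum_ite_eq' (range (n+3)) (j-1)]
      rw [if_pos (mem_range.mpr (by omega)), if_pos (mem_range.mpr (by omega))]
      ring
    have hR : ∑ k ∈ range (n+3), Pent n i k * Bent n d t k j
        = Pent n i j * (-(bval n d)) := by
      have h : ∀ k, Pent n i k * Bent n d t k j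
          = if k = j then Pent n i k * (-(bval n d)) else 0 := by
        intro k; unfold Bent
        rw [if_neg (by omega), if_neg (by omega), if_neg (by omega), if_neg (by omega)]
        rcases eq_or_ne k j with rfl | hkj
        · rw [if_pos rfl, if_pos rfl]
        · rw [if_neg hkj, if_neg hkj]; ring
      simp_rw [h, Finset.sum_ite_eq' (range (n+3)) j]
      rw [if_pos (mem_range.mpr (by omega))]
    rw [hL, hR, Ment_mid n hn d t _ 2 (by omega) (by omega),
      Ment_mid n hn d t _ (j-1) (by omega) (by omega), Pent_tail n i j (by omega)]
    split_ifs <;> first | omega | contradiction | ring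

lemma PQ_mat (n : ℕ) (hn : 2 ≤ n) : Pmat n * Qmat n = 1 := by
  ext i j
  rw [Matrix.mul_apply, Matrix.one_apply]
  unfold Pmat Qmat
  simp only [Matrix.of_apply]
  rw [Fin.sum_univ_eq_sum_range (fun k => Pent n i.val k * Qent n k j.val) (n+3),
    PQ_nat n hn i.val j.val i.isLt j.isLt]
  simp only [Fin.ext_iff]

lemma MP_mat (n : ℕ) (hn : 2 ≤ n) (d t : ℂ) :
    M12 n d t * Pmat n = Pmat n * Bmat n d t := by
  ext i j
  rw [Matrix.mul_apply, Matrix.mul_apply, M12_eq_Ment]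
  unfold Pmat Bmat
  simp only [Matrix.of_apply]
  rw [Fin.sum_univ_eq_sum_range (fun k => Ment n d t i.val k * Pent n k j.val) (n+3),
    Fin.sum_univ_eq_sum_range (fun k => Pent n i.val k * Bent n d t k j.val) (n+3)]
  exact MP_nat n hn d t i.val j.val i.isLt j.isLt

lemma det_M_eq_det_B (n : ℕ) (hn : 2 ≤ n) (d t : ℂ) :
    (M12 n d t).det = (Bmat n d t).det := by
  have hPQ := PQ_mat n hn
  have hM : M12 n d t = Pmat n * Bmat n d t * Qmat n := by
    calc M12 n d t = M12 n d t * (Pmat n * Qmat n) := by rw [hPQ, mul_one]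
    _ = (M12 n d t * Pmat n) * Qmat n := by rw [mul_assoc]
    _ = Pmat n * Bmat n d t * Qmat n := by rw [MP_mat n hn d t]
  have h1 : (Pmat n).det * (Qmat n).det = 1 := by
    rw [← Matrix.det_mul, hPQ, Matrix.det_one]
  calc (M12 n d t).det = (Pmat n).det * (Bmat n d t).det * (Qmat n).det := by
        rw [hM, Matrix.det_mul, Matrix.det_mul]
  _ = ((Pmat n).det * (Qmat n).det) * (Bmat n d t).det := by ring
  _ = (Bmat n d t).det := by rw [h1, one_mul]

noncomputable def Cmat (n : ℕ) (d t : ℂ) : Matrix (Fin 4) (Fin 4) ℂ :=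
  !![0, 1, 1, (n:ℂ);
     1, 0, t, (n:ℂ)*d^2;
     1, t, 0, (n:ℂ)*d^2;
     1, d^2, d^2, ((n:ℂ)-1) * bval n d]

lemma det_B (n : ℕ) (hn : 2 ≤ n) (d t : ℂ) :
    (Bmat n d t).det = (Cmat n d t).det * (-(bval n d))^(n-1) := by
  have hcast : 4 + (n-1) = n+3 := by omega
  let e : Fin 4 ⊕ Fin (n-1) ≃ Fin (n+3) := finSumFinEquiv.trans (finCongr hcast)
  have he1 : ∀ i : Fin 4, ((e (Sum.inl i)) : ℕ) = i.val := by
    intro i; simp [e, finSumFinEquiv]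
  have he2 : ∀ k : Fin (n-1), ((e (Sum.inr k)) : ℕ) = 4 + k.val := by
    intro k; simp [e, finSumFinEquiv]
  have hsub : (Bmat n d t).submatrix e e
      = Matrix.fromBlocks (Cmat n d t) 0 0 (Matrix.diagonal fun _ : Fin (n-1) => -(bval n d)) := by
    ext i j
    rcases i with i | ki <;> rcases j with j | kj
    · simp only [Matrix.submatrix_apply, Matrix.fromBlocks_apply₁₁]
      unfold Bmat
      simp only [Matrix.of_apply]
      rw [show ((e (Sum.inl i)) : ℕ) = i.val from he1 i,
        show ((e (Sum.inl j)) : ℕ) = j.val from he1 j]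
      fin_cases i <;> fin_cases j <;> norm_num [Bent, Cmat, bval]
    · simp only [Matrix.submatrix_apply, Matrix.fromBlocks_apply₁₂]
      unfold Bmat
      simp only [Matrix.of_apply]
      rw [he1 i, he2 kj]
      have hi4 : (i:ℕ) < 4 := i.isLt
      unfold Bent
      rw [if_neg (by omega), if_neg (by omega), if_neg (by omega), if_neg (by omega),
        if_neg (by omega)]
      simp
    · simp only [Matrix.submatrix_apply, Matrix.fromBlocks_apply₂₁]
      unfold Bmat
      simp only [Matrix.of_apply]
      rw [he2 ki, he1 j]
      have hj4 : (j:ℕ) < 4 := j.isLt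
      unfold Bent
      rcases (by omega : (j:ℕ) = 0 ∨ (j:ℕ) = 1 ∨ (j:ℕ) = 2 ∨ (j:ℕ) = 3)
        with h | h | h | h <;> rw [h]
      · rw [if_pos rfl, if_neg (by omega)]; simp
      · rw [if_neg (by omega), if_pos rfl, if_neg (by omega), if_neg (by omega),
          if_neg (by omega)]; simp
      · rw [if_neg (by omega), if_neg (by omega), if_pos rfl, if_neg (by omega),
          if_neg (by omega), if_neg (by omega)]; simp
      · rw [if_neg (by omega), if_neg (by omega), if_neg (by omega), if_pos rfl,
          if_neg (by omega), if_neg (by omega), if_neg (by omega)]; simp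
    · simp only [Matrix.submatrix_apply, Matrix.fromBlocks_apply₂₂]
      unfold Bmat
      simp only [Matrix.of_apply]
      rw [he2 ki, he2 kj, Matrix.diagonal_apply]
      unfold Bent
      rw [if_neg (by omega), if_neg (by omega), if_neg (by omega), if_neg (by omega)]
      rcases eq_or_ne ki kj with rfl | hne
      · rw [if_pos rfl, if_pos rfl]
      · rw [if_neg (by simpa [Fin.ext_iff] using fun h => hne (Fin.ext (by omega))),
          if_neg hne]
  calc (Bmat n d t).det = ((Bmat n d t).submatrix e e).det :=
        (Matrix.det_submatrix_equiv_self e _).symm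
  _ = (Cmat n d t).det * (Matrix.diagonal fun _ : Fin (n-1) => -(bval n d)).det := by
      rw [hsub, Matrix.det_fromBlocks_zero₂₁]
  _ = (Cmat n d t).det * (-(bval n d))^(n-1) := by
      rw [Matrix.det_diagonal]
      simp

lemma det_C (n : ℕ) (hn : 2 ≤ n) (d t : ℂ) :
    (Cmat n d t).det = ((n:ℂ))⁻¹ * t * ((n:ℂ)^2 * t - 4*d^2) := by
  have hn0 : (n:ℂ) ≠ 0 := Nat.cast_ne_zero.mpr (by omega)
  unfold Cmat bval
  rw [Matrix.det_succ_row_zero]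
  simp only [Fin.sum_univ_succ, Fin.sum_univ_zero, Matrix.det_succ_row_zero]
  norm_num [Fin.succAbove, Fin.lt_def, Matrix.cons_val_zero, Matrix.cons_val_one,
    Matrix.head_cons, Matrix.cons_val_succ, Fin.val_zero, Fin.val_succ, Fin.castSucc,
    Fin.castAdd, Fin.castLE, Matrix.vecHead, Matrix.vecTail, Matrix.cons_val, Matrix.cons_val_two]
  field_simp
  ring

theorem stmt12 (n : ℕ) (hn : 2 ≤ n) (d : ℝ) (hd : 0 < d) (t : ℂ) :
    Matrix.det (M12 n (d : ℂ) t) =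
      ((-2 * (n : ℂ) - 2) ^ (n - 1) / (n : ℂ) ^ n) * (d : ℂ) ^ (2 * n - 2) * t *
        ((n : ℂ) ^ 2 * t - 4 * (d : ℂ) ^ 2) := by
  rw [det_M_eq_det_B n hn _ t, det_B n hn, det_C n hn]
  obtain ⟨m, rfl⟩ : ∃ m, n = m + 1 := ⟨n - 1, by omega⟩
  have hc : ((m + 1 : ℕ) : ℂ) ≠ 0 := Nat.cast_ne_zero.mpr (by omega)
  have hb : -(bval (m+1) (d:ℂ))
      = ((-2 * ((m+1 : ℕ) : ℂ) - 2) / ((m+1 : ℕ) : ℂ)) * (d:ℂ)^2 := by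
    have hc' : ((m:ℂ)+1) ≠ 0 := Nat.cast_add_one_ne_zero m
    unfold bval; push_cast; field_simp; ring
  rw [show (m + 1 - 1 : ℕ) = m from by omega, show (2 * (m+1) - 2 : ℕ) = 2 * m from by omega,
    hb, mul_pow, div_pow, ← pow_mul]
  rw [show ((m+1:ℕ):ℂ) ^ (m + 1) = ((m+1:ℕ):ℂ) ^ m * ((m+1:ℕ):ℂ) from pow_succ _ m]
  have hc' : ((m:ℂ)+1) ≠ 0 := Nat.cast_add_one_ne_zero m
  push_cast
  field_simp
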